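/- arXiv:2105.05545 — 2 statements merged into one kernel-verified Lean document; each statement's English description precedes it below -/
import Mathlib

section
/- Define recursions α_0 = 1/2, β_0 = 3/2, α_{ℓ+1} = α_ℓ(1 − 5√(δ/α_ℓ))/2, β_{ℓ+1} = β_ℓ(1 + 5√(δ/α_ℓ))/2, with 0 < δ < 1/200, and let L be minimal with α_L ≤ 100δ. Then α_ℓ ≥ 2^{L−ℓ−1}·100δ for ℓ = 0,…,L−1, and β_L = 3·α_L·∏_{ℓ=0}^{L−1} (1 + 5√(δ/α_ℓ))/(1 − 5√(δ/α_ℓ)) ≤ C·δ where C = 300·∏_{ℓ≥2} (1 + 2^{−ℓ/2})/(1 − 2^{−ℓ/2}) < ∞. -/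
private noncomputable def faux (k : ℕ) : ℝ :=
  (1 + Real.sqrt ((1 / 2 : ℝ) ^ (k + 2))) / (1 - Real.sqrt ((1 / 2 : ℝ) ^ (k + 2)))

private lemma Aaux_nonneg (k : ℕ) : 0 ≤ Real.sqrt ((1 / 2 : ℝ) ^ (k + 2)) :=
  Real.sqrt_nonneg _

private lemma Aaux_le_half (k : ℕ) : Real.sqrt ((1 / 2 : ℝ) ^ (k + 2)) ≤ 1 / 2 := by
  have h1 : ((1:ℝ)/2) ^ (k + 2) ≤ ((1:ℝ)/2) ^ 2 :=
    pow_le_pow_of_le_one (by norm_num) (by norm_num) (by omega)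
  calc Real.sqrt ((1/2 : ℝ) ^ (k+2)) ≤ Real.sqrt (((1:ℝ)/2) ^ 2) := Real.sqrt_le_sqrt h1
    _ = 1/2 := Real.sqrt_sq (by norm_num)

private lemma faux_den_pos (k : ℕ) : (0:ℝ) < 1 - Real.sqrt ((1 / 2 : ℝ) ^ (k + 2)) := by
  have := Aaux_le_half k; linarith

private lemma faux_one_le (k : ℕ) : (1:ℝ) ≤ faux k := by
  rw [faux, le_div_iff₀ (faux_den_pos k)]
  have := Aaux_nonneg k; linarith

private lemma faux_pos (k : ℕ) : (0:ℝ) < faux k := lt_of_lt_of_le one_pos (faux_one_le k)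

private lemma sqrt_pow_aux (x : ℝ) (hx : 0 ≤ x) (n : ℕ) :
    Real.sqrt (x ^ n) = Real.sqrt x ^ n := by
  induction n with
  | zero => simp
  | succ k ih => rw [pow_succ, Real.sqrt_mul (by positivity), ih, pow_succ]

private lemma Aaux_summable : Summable (fun k : ℕ => Real.sqrt ((1 / 2 : ℝ) ^ (k + 2))) := by
  have hr : Real.sqrt (1/2) < 1 := by
    rw [show (1:ℝ) = Real.sqrt 1 by simp]
    exact Real.sqrt_lt_sqrt (by norm_num) (by norm_num)
  have : Summable (fun k : ℕ => (Real.sqrt (1/2)) ^ 2 * (Real.sqrt (1/2)) ^ k) :=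
    (summable_geometric_of_lt_one (Real.sqrt_nonneg _) hr).mul_left _
  apply this.congr
  intro k
  rw [sqrt_pow_aux (1/2) (by norm_num), pow_add, mul_comm]

private lemma faux_log_summable : Summable (fun k => Real.log (faux k)) := by
  apply Summable.of_nonneg_of_le (fun k => Real.log_nonneg (faux_one_le k)) (fun k => ?_)
    (Aaux_summable.mul_left 4)
  have h1 : Real.log (faux k) ≤ faux k - 1 := by
    have := Real.log_le_sub_one_of_pos (faux_pos k)
    linarith
  have h2 : faux k - 1 ≤ 4 * Real.sqrt ((1 / 2 : ℝ) ^ (k + 2)) := by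
    rw [faux, div_sub_one (ne_of_gt (faux_den_pos k)), div_le_iff₀ (faux_den_pos k)]
    have ha := Aaux_nonneg k; have hb := Aaux_le_half k
    nlinarith
  linarith

private lemma faux_hasProd :
    HasProd faux (Real.exp (∑' k, Real.log (faux k))) := by
  have h := faux_log_summable.hasSum.rexp
  have heq : (Real.exp ∘ fun k => Real.log (faux k)) = faux :=
    funext fun k => Real.exp_log (faux_pos k)
  rwa [heq] at h

private lemma faux_tprod_eq :
    ∏' k, faux k = Real.exp (∑' k, Real.log (faux k)) := faux_hasProd.tprod_eq

private lemma faux_prod_le (s : Finset ℕ) : ∏ i ∈ s, faux i ≤ ∏' k, faux k := by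
  calc ∏ i ∈ s, faux i = Real.exp (∑ i ∈ s, Real.log (faux i)) := by
        rw [Real.exp_sum]
        exact Finset.prod_congr rfl (fun i _ => (Real.exp_log (faux_pos i)).symm)
    _ ≤ Real.exp (∑' k, Real.log (faux k)) := by
        apply Real.exp_le_exp.2
        exact Summable.sum_le_tsum s (fun i _ => Real.log_nonneg (faux_one_le i)) faux_log_summable
    _ = ∏' k, faux k := faux_tprod_eq.symm

/-- For the recursions `α_0 = 1/2`, `β_0 = 3/2`,
`α_{ℓ+1} = α_ℓ(1 − 5√(δ/α_ℓ))/2`, `β_{ℓ+1} = β_ℓ(1 + 5√(δ/α_ℓ))/2` with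
`0 < δ < 1/200`, and `L` minimal with `α_L ≤ 100δ`: one has
`α_ℓ ≥ 2^{L−ℓ−1}·100δ` for `ℓ < L`, the product formula
`β_L = 3·α_L·∏_{ℓ<L} (1+5√(δ/α_ℓ))/(1−5√(δ/α_ℓ))`, and `β_L ≤ C·δ` with
`C = 300·∏_{ℓ≥2} (1+√(2^{-ℓ}))/(1−√(2^{-ℓ}))`. -/
theorem stmt9
    (δ : ℝ) (hδ : 0 < δ) (hδ' : δ < 1 / 200)
    (α β : ℕ → ℝ) (hα0 : α 0 = 1 / 2) (hβ0 : β 0 = 3 / 2)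
    (hrecα : ∀ ℓ, α (ℓ + 1) = α ℓ * (1 - 5 * Real.sqrt (δ / α ℓ)) / 2)
    (hrecβ : ∀ ℓ, β (ℓ + 1) = β ℓ * (1 + 5 * Real.sqrt (δ / α ℓ)) / 2)
    (L : ℕ) (hL : α L ≤ 100 * δ) (hLmin : ∀ k < L, 100 * δ < α k) :
    (∀ ℓ < L, 2 ^ (L - ℓ - 1) * (100 * δ) ≤ α ℓ) ∧
    β L = 3 * α L * ∏ ℓ ∈ Finset.range L,
      (1 + 5 * Real.sqrt (δ / α ℓ)) / (1 - 5 * Real.sqrt (δ / α ℓ)) ∧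
    β L ≤ (300 * ∏' ℓ : ℕ,
      (1 + Real.sqrt ((1 / 2 : ℝ) ^ (ℓ + 2))) /
      (1 - Real.sqrt ((1 / 2 : ℝ) ^ (ℓ + 2)))) * δ := by
  have hs0 : ∀ ℓ, 0 ≤ 5 * Real.sqrt (δ / α ℓ) := fun ℓ => by positivity
  -- Part 1: geometric lower bound
  have part1' : ∀ d ℓ, ℓ + d + 1 = L → 2 ^ d * (100 * δ) ≤ α ℓ := by
    intro d
    induction d with
    | zero =>
      intro ℓ hℓ
      have := hLmin ℓ (by omega)
      simpa using this.le
    | succ d ih =>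
      intro ℓ hℓ
      have h1 : 2 ^ d * (100 * δ) ≤ α (ℓ + 1) := ih (ℓ + 1) (by omega)
      have hpos : 100 * δ < α ℓ := hLmin ℓ (by omega)
      have hαpos : (0:ℝ) < α ℓ := lt_trans (by positivity) hpos
      have h2 : α (ℓ + 1) ≤ α ℓ / 2 := by
        rw [hrecα ℓ]
        have ht := Real.sqrt_nonneg (δ / α ℓ)
        nlinarith [mul_nonneg hαpos.le ht]
      calc (2:ℝ) ^ (d+1) * (100 * δ) = 2 * (2 ^ d * (100 * δ)) := by ring
        _ ≤ 2 * α (ℓ + 1) := by linarith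
        _ ≤ α ℓ := by linarith
  have part1 : ∀ ℓ < L, 2 ^ (L - ℓ - 1) * (100 * δ) ≤ α ℓ := by
    intro ℓ hℓ
    exact part1' (L - ℓ - 1) ℓ (by omega)
  -- bound on s ℓ for ℓ < L
  have hsA : ∀ ℓ < L, 5 * Real.sqrt (δ / α ℓ)
      ≤ Real.sqrt ((1/2 : ℝ) ^ (L - ℓ - 1 + 2)) := by
    intro ℓ hℓ
    have hα : (0:ℝ) < α ℓ := lt_trans (by positivity) (hLmin ℓ hℓ)
    have hge := part1 ℓ hℓ
    have h5 : 5 * Real.sqrt (δ / α ℓ) = Real.sqrt (25 * (δ / α ℓ)) := by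
      rw [Real.sqrt_mul (by norm_num : (0:ℝ) ≤ 25)]
      have h25 : Real.sqrt 25 = 5 := by
        rw [show (25:ℝ) = 5 ^ 2 by norm_num, Real.sqrt_sq (by norm_num)]
      rw [h25]
    rw [h5]
    apply Real.sqrt_le_sqrt
    rw [show 25 * (δ / α ℓ) = 25 * δ / α ℓ from (mul_div_assoc _ _ _).symm,
      div_le_iff₀ hα]
    have key : ((1:ℝ)/2) ^ (L - ℓ - 1) * 2 ^ (L - ℓ - 1) = 1 := by
      rw [one_div, inv_pow, inv_mul_cancel₀ (by positivity)]
    have expand : ((1:ℝ)/2) ^ (L - ℓ - 1 + 2) = ((1:ℝ)/2) ^ (L - ℓ - 1) * (1/4) := by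
      rw [pow_add]; norm_num
    rw [expand]
    have hp : (0:ℝ) < ((1:ℝ)/2) ^ (L - ℓ - 1) := by positivity
    nlinarith [mul_le_mul_of_nonneg_left hge (le_of_lt hp)]
  have hshalf : ∀ ℓ < L, 5 * Real.sqrt (δ / α ℓ) ≤ 1/2 := fun ℓ hℓ =>
    (hsA ℓ hℓ).trans (Aaux_le_half _)
  -- Part 2: product formula
  have part2 : ∀ n ≤ L, β n = 3 * α n * ∏ ℓ ∈ Finset.range n,
      (1 + 5 * Real.sqrt (δ / α ℓ)) / (1 - 5 * Real.sqrt (δ / α ℓ)) := by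
    intro n hn
    induction n with
    | zero => simp [hβ0, hα0]; norm_num
    | succ m ih =>
      have hm : m < L := by omega
      have ihm := ih (by omega)
      have hle := hshalf m hm
      have hnn := hs0 m
      rw [Finset.prod_range_succ, hrecβ m, hrecα m, ihm]
      generalize hgen : 5 * Real.sqrt (δ / α m) = t
      rw [hgen] at hle hnn
      have hne : (1:ℝ) - t ≠ 0 := by intro h; rw [sub_eq_zero] at h; rw [← h] at hle; norm_num at hle
      generalize (∏ ℓ ∈ Finset.range m,
        (1 + 5 * Real.sqrt (δ / α ℓ)) / (1 - 5 * Real.sqrt (δ / α ℓ))) = P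
      field_simp
  refine ⟨part1, part2 L le_rfl, ?_⟩
  -- Part 3
  have hprod_le : (∏ ℓ ∈ Finset.range L,
      (1 + 5 * Real.sqrt (δ / α ℓ)) / (1 - 5 * Real.sqrt (δ / α ℓ))) ≤ ∏' k, faux k := by
    have step1 : (∏ ℓ ∈ Finset.range L,
        (1 + 5 * Real.sqrt (δ / α ℓ)) / (1 - 5 * Real.sqrt (δ / α ℓ)))
        ≤ ∏ ℓ ∈ Finset.range L, faux (L - 1 - ℓ) := by
      apply Finset.prod_le_prod
      · intro ℓ hℓ
        rw [Finset.mem_range] at hℓ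
        have h1 : (0:ℝ) < 1 - 5 * Real.sqrt (δ / α ℓ) := by have := hshalf ℓ hℓ; linarith
        have h2 := hs0 ℓ
        positivity
      · intro ℓ hℓ
        rw [Finset.mem_range] at hℓ
        have hidx : L - 1 - ℓ = L - ℓ - 1 := by omega
        have hst : 5 * Real.sqrt (δ / α ℓ)
            ≤ Real.sqrt ((1/2 : ℝ) ^ (L - 1 - ℓ + 2)) := by rw [hidx]; exact hsA ℓ hℓ
        have h1 : (0:ℝ) < 1 - 5 * Real.sqrt (δ / α ℓ) := by have := hshalf ℓ hℓ; linarith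
        have h2 := faux_den_pos (L - 1 - ℓ)
        rw [faux, div_le_div_iff₀ h1 h2]
        have h3 := hs0 ℓ
        nlinarith
    have step2 : (∏ ℓ ∈ Finset.range L, faux (L - 1 - ℓ)) = ∏ k ∈ Finset.range L, faux k :=
      Finset.prod_range_reflect faux L
    have step3 := faux_prod_le (Finset.range L)
    linarith
  have hP0 : (0:ℝ) ≤ ∏ ℓ ∈ Finset.range L,
      (1 + 5 * Real.sqrt (δ / α ℓ)) / (1 - 5 * Real.sqrt (δ / α ℓ)) := by
    apply Finset.prod_nonneg
    intro ℓ hℓ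
    rw [Finset.mem_range] at hℓ
    have h1 : (0:ℝ) < 1 - 5 * Real.sqrt (δ / α ℓ) := by have := hshalf ℓ hℓ; linarith
    have h2 := hs0 ℓ
    positivity
  have htp : (∏' ℓ : ℕ, (1 + Real.sqrt ((1 / 2 : ℝ) ^ (ℓ + 2))) /
      (1 - Real.sqrt ((1 / 2 : ℝ) ^ (ℓ + 2)))) = ∏' k, faux k := by
    simp only [faux]
  rw [part2 L le_rfl, htp]
  calc 3 * α L * ∏ ℓ ∈ Finset.range L,
        (1 + 5 * Real.sqrt (δ / α ℓ)) / (1 - 5 * Real.sqrt (δ / α ℓ))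
      ≤ 3 * (100 * δ) * ∏ ℓ ∈ Finset.range L,
        (1 + 5 * Real.sqrt (δ / α ℓ)) / (1 - 5 * Real.sqrt (δ / α ℓ)) := by
        apply mul_le_mul_of_nonneg_right _ hP0
        linarith
    _ ≤ 3 * (100 * δ) * ∏' k, faux k := by
        apply mul_le_mul_of_nonneg_left hprod_le (by linarith)
    _ = (300 * ∏' k, faux k) * δ := by ring
end

section
/- Let μ be a finite measure on D of total mass M, V_n ⊂ L²(D,μ) a finite-dimensional subspace containing the constant functions, X = {x¹,…,x^m} a sample and w_i ≥ 0 weights such that the discrete norm ‖v‖_X² = (1/m)∑_i w_i|v(x^i)|² satisfies β^{-1}‖v‖² ≤ ‖v‖_X² ≤ α‖v‖² for all v ∈ V_n. Then for every bounded u, the weighted least-squares projection P^X_{V_n}u satisfies ‖u − P^X_{V_n}u‖_{L²} ≤ √M·(1 + √(αβ))·min_{v∈V_n}‖u − v‖_{L∞}. -/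
open MeasureTheory

lemma aux_sqrt_eLpNorm {D : Type*} [MeasurableSpace D] {μ : Measure D} {h : D → ℂ}
    (hh : MemLp h 2 μ) :
    (eLpNorm h 2 μ).toReal = Real.sqrt (∫ y, ‖h y‖ ^ 2 ∂μ) := by
  have h2 : ((2:ENNReal)).toReal = (2:ℝ) := by simp
  have hi : ∀ a, ‖h a‖ ^ ((2:ENNReal)).toReal = ‖h a‖ ^ (2:ℕ) := by
    intro a; rw [h2, ← Real.rpow_natCast]; norm_num
  have hnn : (0:ℝ) ≤ ∫ y, ‖h y‖ ^ 2 ∂μ := integral_nonneg fun y => by positivity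
  rw [hh.eLpNorm_eq_integral_rpow_norm two_ne_zero ENNReal.ofNat_ne_top]
  simp_rw [hi]
  rw [ENNReal.toReal_ofReal (Real.rpow_nonneg hnn _), h2, Real.sqrt_eq_rpow]
  norm_num

/-- Temlyakov-type lemma: if `μ(D) = M < ∞`, `V_n` contains the constants, and
the discrete norm `‖v‖_X² = (1/m)∑ᵢ wᵢ|v(xⁱ)|²` satisfies the framing
`β⁻¹‖v‖² ≤ ‖v‖_X² ≤ α‖v‖²` on `V_n`, then the weighted least-squares
projection `P^X_{V_n}u` of a bounded `u` satisfies
`‖u − P^X_{V_n}u‖_{L²} ≤ √M (1 + √(αβ)) min_{v∈V_n} ‖u − v‖_{L∞}`. -/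
theorem stmt12
    {D : Type*} [MeasurableSpace D] (μ : Measure D)
    (M : ℝ) (hM : 0 ≤ M) (hμ : μ Set.univ = ENNReal.ofReal M)
    (V : Submodule ℂ (D → ℂ)) (hVfin : FiniteDimensional ℂ V)
    (hconst : (fun _ => (1 : ℂ)) ∈ V)
    (hVmem : ∀ v ∈ V, MemLp v 2 μ)
    {m : ℕ} (hm : 0 < m) (X : Fin m → D) (w : Fin m → ℝ) (hw : ∀ i, 0 ≤ w i)
    (α β : ℝ) (hα : 0 < α) (hβ : 0 < β)
    (hframe : ∀ v ∈ V,
      β⁻¹ * ∫ y, ‖v y‖ ^ 2 ∂μ ≤ (1 / (m : ℝ)) * ∑ i, w i * ‖v (X i)‖ ^ 2 ∧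
      (1 / (m : ℝ)) * ∑ i, w i * ‖v (X i)‖ ^ 2 ≤ α * ∫ y, ‖v y‖ ^ 2 ∂μ)
    (u : D → ℂ) (hu : MemLp u 2 μ)
    (Pu : D → ℂ) (hPuV : Pu ∈ V)
    -- `Pu` is the orthogonal projection of `u` on `V_n` for the discrete inner
    -- product, characterized by the normal equations:
    (hproj : ∀ v ∈ V,
      (1 / (m : ℂ)) * ∑ i, (w i : ℂ) * (u (X i) - Pu (X i)) *
        starRingEnd ℂ (v (X i)) = 0) :
    ∀ v ∈ V, ∀ t : ℝ, (∀ y, ‖u y - v y‖ ≤ t) →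
      Real.sqrt (∫ y, ‖u y - Pu y‖ ^ 2 ∂μ) ≤
        Real.sqrt M * (1 + Real.sqrt (α * β)) * t := by
  intro v hv t ht
  by_cases hD : Nonempty D
  case neg =>
    have hM0 : M = 0 := by
      have huniv : (Set.univ : Set D) = ∅ :=
        Set.univ_eq_empty_iff.mpr (not_nonempty_iff.mp hD)
      have h0 : ENNReal.ofReal M = 0 := by rw [← hμ, huniv, measure_empty]
      exact le_antisymm (by simpa using ENNReal.ofReal_eq_zero.mp h0) hM
    have hμ0 : μ = 0 := by
      apply Measure.measure_univ_eq_zero.mp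
      rw [hμ, hM0]; simp
    rw [hμ0, hM0]
    simp
  case pos =>
    obtain ⟨y0⟩ := hD
    have ht0 : 0 ≤ t := le_trans (norm_nonneg _) (ht y0)
    set f : D → ℂ := fun y => u y - v y with hfdef
    set g : D → ℂ := fun y => v y - Pu y with hgdef
    have hgV : g ∈ V := V.sub_mem hv hPuV
    have hfM : MemLp f 2 μ := hu.sub (hVmem v hv)
    have hgM : MemLp g 2 μ := hVmem g hgV
    have huPM : MemLp (fun y => u y - Pu y) 2 μ := hu.sub (hVmem Pu hPuV)
    set A : ℝ := ∑ i, w i * ‖f (X i)‖ ^ 2 with hAdef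
    set B : ℝ := ∑ i, w i * ‖g (X i)‖ ^ 2 with hBdef
    have hA0 : (0:ℝ) ≤ A :=
      Finset.sum_nonneg fun i _ => mul_nonneg (hw i) (by positivity)
    have hB0 : (0:ℝ) ≤ B :=
      Finset.sum_nonneg fun i _ => mul_nonneg (hw i) (by positivity)
    -- normal equations applied to g
    have hS : ∑ i, (w i : ℂ) * (u (X i) - Pu (X i)) * starRingEnd ℂ (g (X i)) = 0 := by
      have h1 := hproj g hgV
      have hm' : (1 / (m:ℂ)) ≠ 0 := by
        simp [Nat.cast_ne_zero, hm.ne']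
      exact (mul_eq_zero.mp h1).resolve_left hm'
    have hzz : ∀ z : ℂ, z * starRingEnd ℂ z = ((‖z‖ ^ 2 : ℝ) : ℂ) := fun z => by
      rw [Complex.mul_conj, Complex.sq_norm]
    have hgX : ∀ i, g (X i) = v (X i) - Pu (X i) := fun i => rfl
    have hG : ∑ i, (w i:ℂ) * (g (X i) * starRingEnd ℂ (g (X i))) = (B:ℂ) := by
      rw [hBdef]
      push_cast
      refine Finset.sum_congr rfl fun i _ => ?_
      rw [hzz]
      push_cast
      ring
    have hBT : (B:ℂ) = ∑ i, (w i:ℂ) * (v (X i) - u (X i)) * starRingEnd ℂ (g (X i)) := by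
      have hsplit : ∑ i, (w i:ℂ) * (g (X i) * starRingEnd ℂ (g (X i)))
          = (∑ i, (w i:ℂ) * (v (X i) - u (X i)) * starRingEnd ℂ (g (X i)))
            + ∑ i, (w i:ℂ) * (u (X i) - Pu (X i)) * starRingEnd ℂ (g (X i)) := by
        rw [← Finset.sum_add_distrib]
        refine Finset.sum_congr rfl fun i _ => ?_
        rw [hgX i]
        ring
      rw [← hG, hsplit, hS, add_zero]
    have hBle : B ≤ ∑ i, w i * (‖f (X i)‖ * ‖g (X i)‖) := by
      calc B = ‖(B:ℂ)‖ := by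
              rw [Complex.norm_real, Real.norm_of_nonneg hB0]
        _ = ‖∑ i, (w i:ℂ) * (v (X i) - u (X i)) * starRingEnd ℂ (g (X i))‖ := by rw [hBT]
        _ ≤ ∑ i, ‖(w i:ℂ) * (v (X i) - u (X i)) * starRingEnd ℂ (g (X i))‖ :=
              norm_sum_le _ _
        _ = ∑ i, w i * (‖f (X i)‖ * ‖g (X i)‖) := by
              refine Finset.sum_congr rfl fun i _ => ?_
              rw [norm_mul, norm_mul, Complex.norm_real, Real.norm_of_nonneg (hw i),
                RCLike.norm_conj,
                show v (X i) - u (X i) = -(f (X i)) by rw [hfdef]; simp, norm_neg,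
                mul_assoc]
    have hCS : (∑ i, w i * (‖f (X i)‖ * ‖g (X i)‖)) ^ 2 ≤ A * B := by
      refine Finset.sum_sq_le_sum_mul_sum_of_sq_eq_mul _
        (fun i _ => mul_nonneg (hw i) (by positivity))
        (fun i _ => mul_nonneg (hw i) (by positivity))
        (fun i _ => by ring)
    have hBA : B ≤ A := by
      rcases eq_or_lt_of_le hB0 with h0 | h0
      · rw [← h0]; exact hA0
      · have h1 : B ^ 2 ≤ A * B := le_trans (pow_le_pow_left₀ hB0 hBle 2) hCS
        nlinarith
    have hAle : A ≤ (∑ i, w i) * t ^ 2 := by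
      rw [Finset.sum_mul]
      refine Finset.sum_le_sum fun i _ => ?_
      exact mul_le_mul_of_nonneg_left
        (pow_le_pow_left₀ (norm_nonneg _) (ht (X i)) 2) (hw i)
    -- bound on the total weight from the constant function
    have hsumw : (1 / (m:ℝ)) * ∑ i, w i ≤ α * M := by
      have hc := (hframe (fun _ => (1:ℂ)) hconst).2
      simpa [integral_const, measureReal_def, hμ, ENNReal.toReal_ofReal hM] using hc
    have hmpos : (0:ℝ) < m := Nat.cast_pos.mpr hm
    have hIg : ∫ y, ‖g y‖ ^ 2 ∂μ ≤ α * β * M * t ^ 2 := by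
      have h1 : β⁻¹ * ∫ y, ‖g y‖ ^ 2 ∂μ ≤ (1/(m:ℝ)) * B := (hframe g hgV).1
      have h2 : (1/(m:ℝ)) * B ≤ (1/(m:ℝ)) * ((∑ i, w i) * t ^ 2) :=
        mul_le_mul_of_nonneg_left (le_trans hBA hAle) (by positivity)
      have h3 : (1/(m:ℝ)) * ((∑ i, w i) * t ^ 2) ≤ (α * M) * t ^ 2 := by
        rw [← mul_assoc]
        exact mul_le_mul_of_nonneg_right hsumw (sq_nonneg t)
      have h4 := le_trans h1 (le_trans h2 h3)
      calc ∫ y, ‖g y‖ ^ 2 ∂μ = β * (β⁻¹ * ∫ y, ‖g y‖ ^ 2 ∂μ) := by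
            field_simp
        _ ≤ β * (α * M * t ^ 2) := mul_le_mul_of_nonneg_left h4 hβ.le
        _ = α * β * M * t ^ 2 := by ring
    have : IsFiniteMeasure μ := ⟨by rw [hμ]; exact ENNReal.ofReal_lt_top⟩
    have hIf : ∫ y, ‖f y‖ ^ 2 ∂μ ≤ M * t ^ 2 := by
      have hint : Integrable (fun y => ‖f y‖ ^ 2) μ := by
        have hr := hfM.integrable_norm_rpow two_ne_zero ENNReal.ofNat_ne_top
        have hi : ∀ a, ‖f a‖ ^ ((2:ENNReal)).toReal = ‖f a‖ ^ (2:ℕ) := by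
          intro a
          rw [show ((2:ENNReal)).toReal = (2:ℝ) by simp, ← Real.rpow_natCast]
          norm_num
        simpa [hi] using hr
      calc ∫ y, ‖f y‖ ^ 2 ∂μ ≤ ∫ _, t ^ 2 ∂μ :=
            integral_mono hint (integrable_const _)
              fun y => pow_le_pow_left₀ (norm_nonneg _) (ht y) 2
        _ = M * t ^ 2 := by
            rw [integral_const, measureReal_def, hμ, ENNReal.toReal_ofReal hM, smul_eq_mul]
    have hfg : (fun y => u y - Pu y) = fun y => f y + g y := by
      funext y
      show u y - Pu y = (u y - v y) + (v y - Pu y)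
      ring
    have htri : Real.sqrt (∫ y, ‖u y - Pu y‖ ^ 2 ∂μ) ≤
        Real.sqrt (∫ y, ‖f y‖ ^ 2 ∂μ) + Real.sqrt (∫ y, ‖g y‖ ^ 2 ∂μ) := by
      rw [← aux_sqrt_eLpNorm huPM, ← aux_sqrt_eLpNorm hfM, ← aux_sqrt_eLpNorm hgM]
      have hle : eLpNorm (fun y => u y - Pu y) 2 μ ≤ eLpNorm f 2 μ + eLpNorm g 2 μ := by
        rw [hfg]
        exact eLpNorm_add_le hfM.aestronglyMeasurable hgM.aestronglyMeasurable one_le_two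
      calc (eLpNorm (fun y => u y - Pu y) 2 μ).toReal
          ≤ (eLpNorm f 2 μ + eLpNorm g 2 μ).toReal :=
            ENNReal.toReal_mono (ENNReal.add_ne_top.mpr ⟨hfM.2.ne, hgM.2.ne⟩) hle
        _ = (eLpNorm f 2 μ).toReal + (eLpNorm g 2 μ).toReal :=
            ENNReal.toReal_add hfM.2.ne hgM.2.ne
    have h1 : Real.sqrt (∫ y, ‖f y‖ ^ 2 ∂μ) ≤ Real.sqrt M * t := by
      calc Real.sqrt (∫ y, ‖f y‖ ^ 2 ∂μ) ≤ Real.sqrt (M * t ^ 2) :=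
            Real.sqrt_le_sqrt hIf
        _ = Real.sqrt M * t := by
            rw [Real.sqrt_mul hM, Real.sqrt_sq ht0]
    have h2 : Real.sqrt (∫ y, ‖g y‖ ^ 2 ∂μ) ≤ Real.sqrt (α * β) * (Real.sqrt M * t) := by
      calc Real.sqrt (∫ y, ‖g y‖ ^ 2 ∂μ) ≤ Real.sqrt (α * β * M * t ^ 2) :=
            Real.sqrt_le_sqrt hIg
        _ = Real.sqrt (α * β) * (Real.sqrt M * t) := by
            rw [show α * β * M * t ^ 2 = (α * β) * (M * t ^ 2) by ring,
              Real.sqrt_mul (by positivity), Real.sqrt_mul hM, Real.sqrt_sq ht0]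
    calc Real.sqrt (∫ y, ‖u y - Pu y‖ ^ 2 ∂μ)
        ≤ Real.sqrt (∫ y, ‖f y‖ ^ 2 ∂μ) + Real.sqrt (∫ y, ‖g y‖ ^ 2 ∂μ) := htri
      _ ≤ Real.sqrt M * t + Real.sqrt (α * β) * (Real.sqrt M * t) := add_le_add h1 h2
      _ = Real.sqrt M * (1 + Real.sqrt (α * β)) * t := by ring
end
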